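/- Let B ⊆ F_q with B - B ⊆ Q ∪ {0}, |B| = s, and φ₁(t) = 1 + Σ_{b∈B} χ(b - t). Then Σ_{t ∉ B} φ₁(t)² = (s+1)(q - s²). -/

import Mathlib

open scoped Classical

set_option linter.unusedSectionVars false

/-- The quadratic character: 0 at 0, 1 on nonzero squares, -1 on non-squares. -/
noncomputable def quadChar {F : Type*} [Field F] (x : F) : ℤ :=
  if x = 0 then 0 else if IsSquare x then 1 else -1

section aux

variable {F : Type*} [Field F] [Fintype F]

lemma quadChar_eq_qc (x : F) : quadChar x = quadraticChar F x := by
  rw [quadraticChar_apply, quadraticCharFun, quadChar]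
  split_ifs <;> rfl

lemma quadChar_zero : quadChar (0 : F) = 0 := by simp [quadChar]

lemma quadChar_one : quadChar (1 : F) = 1 := by
  simp [quadChar, IsSquare.one]

lemma quadChar_mul (x y : F) : quadChar (x * y) = quadChar x * quadChar y := by
  simp only [quadChar_eq_qc]
  exact map_mul (quadraticChar F) x y

lemma quadChar_sq {x : F} (hx : x ≠ 0) : quadChar x * quadChar x = 1 := by
  simp only [quadChar]
  rw [if_neg hx]
  split <;> norm_num

lemma quadChar_isSquare {x : F} (hx : x ≠ 0) (h : IsSquare x) : quadChar x = 1 := by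
  simp [quadChar, hx, h]

lemma sum_quadChar (hF : ringChar F ≠ 2) : ∑ x : F, quadChar x = 0 := by
  simp only [quadChar_eq_qc]
  exact quadraticChar_sum_zero hF

lemma sum_quadChar_shift (hF : ringChar F ≠ 2) {c : F} (hc : c ≠ 0) :
    ∑ t : F, quadChar t * quadChar (t + c) = -1 := by
  classical
  have h0 : ∑ t : F, quadChar t * quadChar (t + c)
      = ∑ t ∈ (Finset.univ : Finset F).erase 0, quadChar t * quadChar (t + c) := by
    rw [← Finset.sum_erase]
    simp [quadChar_zero]
  have h1 : ∀ t ∈ (Finset.univ : Finset F).erase 0,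
      quadChar t * quadChar (t + c) = quadChar (1 + c / t) := by
    intro t ht
    have ht0 : t ≠ 0 := (Finset.mem_erase.mp ht).1
    have : t + c = t * (1 + c / t) := by field_simp
    rw [this, quadChar_mul, ← mul_assoc, quadChar_sq ht0, one_mul]
  rw [h0, Finset.sum_congr rfl h1]
  have h2 : ∑ t ∈ (Finset.univ : Finset F).erase 0, quadChar (1 + c / t)
      = ∑ v ∈ (Finset.univ : Finset F).erase 1, quadChar v := by
    apply Finset.sum_bij' (fun t _ => 1 + c / t) (fun v _ => c / (v - 1))
    · intro t ht
      have ht0 : t ≠ 0 := (Finset.mem_erase.mp ht).1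
      simp only [Finset.mem_erase, Finset.mem_univ, and_true]
      intro h
      apply hc
      have : c / t = 0 := by linear_combination h
      field_simp at this
      simpa using this
    · intro v hv
      have hv1 : v - 1 ≠ 0 := sub_ne_zero.mpr (Finset.mem_erase.mp hv).1
      simp only [Finset.mem_erase, Finset.mem_univ, and_true]
      exact div_ne_zero hc hv1
    · intro t ht
      have ht0 : t ≠ 0 := (Finset.mem_erase.mp ht).1
      field_simp
      simp [hc]
    · intro v hv
      have hv1 : v - 1 ≠ 0 := sub_ne_zero.mpr (Finset.mem_erase.mp hv).1
      field_simp
      ring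
    · intro t ht; rfl
  rw [h2, Finset.sum_erase_eq_sub (by simp), sum_quadChar hF, quadChar_one]
  ring

end aux

theorem stmt_8 {F : Type*} [Field F] [Fintype F]
    (hq : Fintype.card F % 4 = 1) (B : Finset F)
    (hB : ∀ b₁ ∈ B, ∀ b₂ ∈ B, b₁ ≠ b₂ → b₁ - b₂ ≠ 0 ∧ IsSquare (b₁ - b₂)) :
    ∑ t ∈ Bᶜ, (1 + ∑ b ∈ B, quadChar (b - t)) ^ 2 =
      ((B.card : ℤ) + 1) * ((Fintype.card F : ℤ) - (B.card : ℤ) ^ 2) := by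
  classical
  set s : ℤ := (B.card : ℤ) with hs
  set q : ℤ := (Fintype.card F : ℤ) with hQ
  have hF2 : ringChar F ≠ 2 := by
    intro h
    have := FiniteField.even_card_of_char_two h
    omega
  -- value on B
  have hOnB : ∀ t ∈ B, (1 + ∑ b ∈ B, quadChar (b - t)) = s := by
    intro t ht
    have h1 : ∑ b ∈ B, quadChar (b - t) = ∑ b ∈ B.erase t, quadChar (b - t) := by
      rw [← Finset.sum_erase]
      simp [quadChar_zero]
    rw [h1]
    have h2 : ∑ b ∈ B.erase t, quadChar (b - t) = ∑ b ∈ B.erase t, (1 : ℤ) := by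
      apply Finset.sum_congr rfl
      intro b hb
      obtain ⟨hne, hb'⟩ := Finset.mem_erase.mp hb
      obtain ⟨ha, hsq⟩ := hB b hb' t ht hne
      exact quadChar_isSquare ha hsq
    rw [h2, Finset.sum_const, nsmul_eq_mul, mul_one,
      Finset.card_erase_of_mem ht]
    have hcard : 1 ≤ B.card := Finset.card_pos.mpr ⟨t, ht⟩
    push_cast [Nat.cast_sub hcard]
    ring
  have key1 : ∀ b : F, ∑ t : F, quadChar (b - t) = 0 := by
    intro b
    rw [← sum_quadChar (F := F) hF2]
    exact Fintype.sum_equiv (Equiv.subLeft b) _ _ (fun t => rfl)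
  have key2 : ∀ b b' : F, b ≠ b' →
      ∑ t : F, quadChar (b - t) * quadChar (b' - t) = -1 := by
    intro b b' hne
    have hc : b' - b ≠ 0 := sub_ne_zero.mpr (Ne.symm hne)
    rw [← sum_quadChar_shift (F := F) hF2 hc]
    apply Fintype.sum_equiv (Equiv.subLeft b)
    intro t
    simp only [Equiv.subLeft_apply]
    congr 2
    ring
  have key3 : ∀ b : F, ∑ t : F, quadChar (b - t) * quadChar (b - t) = q - 1 := by
    intro b
    have h0 : ∑ t : F, quadChar (b - t) * quadChar (b - t)
        = ∑ t ∈ (Finset.univ : Finset F).erase b, quadChar (b - t) * quadChar (b - t) := by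
      rw [← Finset.sum_erase]
      simp [quadChar_zero]
    rw [h0]
    have h1 : ∀ t ∈ (Finset.univ : Finset F).erase b,
        quadChar (b - t) * quadChar (b - t) = 1 := by
      intro t ht
      exact quadChar_sq (sub_ne_zero.mpr (Ne.symm (Finset.mem_erase.mp ht).1))
    rw [Finset.sum_congr rfl h1, Finset.sum_const, nsmul_eq_mul, mul_one,
      Finset.card_erase_of_mem (Finset.mem_univ b), Finset.card_univ]
    have hc : 1 ≤ Fintype.card F := Fintype.card_pos
    push_cast [Nat.cast_sub hc]
    ring
  have hTotal : ∑ t : F, (1 + ∑ b ∈ B, quadChar (b - t)) ^ 2 = (s + 1) * q - s ^ 2 := by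
    have expand : ∀ t : F, (1 + ∑ b ∈ B, quadChar (b - t)) ^ 2
        = 1 + 2 * (∑ b ∈ B, quadChar (b - t))
          + ∑ b ∈ B, ∑ b' ∈ B, quadChar (b - t) * quadChar (b' - t) := by
      intro t
      rw [← Finset.sum_mul_sum]
      ring
    rw [Finset.sum_congr rfl (fun t _ => expand t), Finset.sum_add_distrib,
      Finset.sum_add_distrib]
    have eA : ∑ _t : F, (1 : ℤ) = q := by
      rw [Finset.sum_const, Finset.card_univ, nsmul_eq_mul, mul_one]
    have eB : ∑ t : F, 2 * (∑ b ∈ B, quadChar (b - t)) = 0 := by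
      rw [← Finset.mul_sum, Finset.sum_comm]
      rw [Finset.sum_congr rfl (fun b _ => key1 b)]
      simp
    have eC : ∑ t : F, ∑ b ∈ B, ∑ b' ∈ B, quadChar (b - t) * quadChar (b' - t)
        = s * (q - 1) + (s * s - s) * (-1) := by
      rw [Finset.sum_comm]
      have hrow : ∀ b ∈ B, ∑ t : F, ∑ b' ∈ B, quadChar (b - t) * quadChar (b' - t)
          = (q - 1) + ((s - 1) * (-1)) := by
        intro b hb
        rw [Finset.sum_comm, ← Finset.add_sum_erase _ _ hb]
        congr 1
        · exact key3 b
        · have h' : ∀ b' ∈ B.erase b, ∑ t : F, quadChar (b - t) * quadChar (b' - t)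
              = -1 := by
            intro b' hb'
            exact key2 b b' (Ne.symm (Finset.mem_erase.mp hb').1)
          rw [Finset.sum_congr rfl h', Finset.sum_const, nsmul_eq_mul,
            Finset.card_erase_of_mem hb]
          have hcard : 1 ≤ B.card := Finset.card_pos.mpr ⟨b, hb⟩
          push_cast [Nat.cast_sub hcard]
          ring
      rw [Finset.sum_congr rfl hrow, Finset.sum_const, nsmul_eq_mul]
      push_cast
      ring
    rw [eA, eB, eC]
    ring
  have hOnBsum : ∑ t ∈ B, (1 + ∑ b ∈ B, quadChar (b - t)) ^ 2 = s * s ^ 2 := by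
    rw [Finset.sum_congr rfl (fun t ht => by rw [hOnB t ht])]
    rw [Finset.sum_const, nsmul_eq_mul]
  have hSplit : ∑ t ∈ B, (1 + ∑ b ∈ B, quadChar (b - t)) ^ 2
      + ∑ t ∈ Bᶜ, (1 + ∑ b ∈ B, quadChar (b - t)) ^ 2
      = (s + 1) * q - s ^ 2 := by
    rw [Finset.sum_add_sum_compl]
    exact hTotal
  rw [hOnBsum] at hSplit
  linarith
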